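/- arXiv:1509.06500 — 3 statements merged into one kernel-verified Lean document; each statement's English description precedes it below -/
import Mathlib

section
/- Let X be a nonnegative continuous random process indexed by a Polish space 𝒳 and let 𝒩 be a random measure on 𝒳 with finite intensity measure μ. Suppose that for every x ∈ 𝒳 there exists a neighbourhood V_x of x such that X_x is independent of the restriction of 𝒩 to V_x, that |X_x| ≤ Y for all x almost surely for some integrable random variable Y, and that E[Y 𝒩(𝒳)] < ∞. Then E[∫_𝒳 X_x 𝒩(dx)] = ∫_𝒳 E[X_x] μ(dx). -/
open MeasureTheory ProbabilityTheory Filter Topology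
open scoped ENNReal

/-- Extended Campbell formula: if `X` is a nonnegative continuous random process on a
Polish space `𝒳` which is locally independent from the random measure `𝒩` (with finite
intensity `μ`), dominated by an integrable `Y` with `E[Y 𝒩(𝒳)] < ∞`, then
`E[∫ X_x 𝒩(dx)] = ∫ E[X_x] μ(dx)`. -/
theorem campbell_locally_independent
    {Ω : Type*} [MeasurableSpace Ω] (P : Measure Ω) [IsProbabilityMeasure P]
    {𝒳 : Type*} [TopologicalSpace 𝒳] [PolishSpace 𝒳] [MeasurableSpace 𝒳] [BorelSpace 𝒳]
    (𝒩 : Ω → Measure 𝒳)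
    (h𝒩meas : ∀ B : Set 𝒳, MeasurableSet B → Measurable fun ω => 𝒩 ω B)
    (μ : Measure 𝒳) [IsFiniteMeasure μ]
    (hμ : ∀ B : Set 𝒳, MeasurableSet B → μ B = ∫⁻ ω, 𝒩 ω B ∂P)
    (X : Ω → 𝒳 → ℝ)
    (hXc : ∀ ω, Continuous (X ω))
    (hXm : ∀ x, Measurable fun ω => X ω x)
    (hXnn : ∀ ω x, 0 ≤ X ω x)
    (hindep : ∀ x : 𝒳, ∃ V ∈ nhds x, ∀ B ⊆ V, MeasurableSet B →
      IndepFun (fun ω => X ω x) (fun ω => 𝒩 ω B) P)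
    (Y : Ω → ℝ) (hY : Integrable Y P)
    (hdom : ∀ᵐ ω ∂P, ∀ x, |X ω x| ≤ Y ω)
    (hYN : ∫⁻ ω, ENNReal.ofReal (Y ω) * 𝒩 ω Set.univ ∂P < ⊤) :
    ∫⁻ ω, (∫⁻ x, ENNReal.ofReal (X ω x) ∂(𝒩 ω)) ∂P
      = ∫⁻ x, (∫⁻ ω, ENNReal.ofReal (X ω x) ∂P) ∂μ := by
  classical
  rcases isEmpty_or_nonempty 𝒳 with hE | hne
  · simp [Measure.eq_zero_of_isEmpty]
  letI := TopologicalSpace.upgradeIsCompletelyMetrizable 𝒳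
  -- choose the independence neighbourhoods and radii
  choose V hVnhds hVind using hindep
  choose r hrpos hball using fun x => Metric.mem_nhds_iff.mp (hVnhds x)
  -- radii of the covering balls at stage n
  set ρ : ℕ → 𝒳 → ℝ := fun n x => min (r x) (1 / (n + 1)) with hρ
  have hρpos : ∀ n x, 0 < ρ n x := fun n x =>
    lt_min (hrpos x) (by positivity)
  have hρr : ∀ n x, ρ n x ≤ r x := fun n x => min_le_left _ _
  have hρn : ∀ n x, ρ n x ≤ 1 / (n + 1) := fun n x => min_le_right _ _
  -- countable covers by small balls
  have hcov : ∀ n : ℕ, ∃ e : ℕ → 𝒳, ∀ x, ∃ i, x ∈ Metric.ball (e i) (ρ n (e i)) := by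
    intro n
    obtain ⟨s, hsc, hsU⟩ :=
      TopologicalSpace.countable_cover_nhds
        (f := fun x => Metric.ball x (ρ n x)) (fun x => Metric.ball_mem_nhds _ (hρpos n x))
    have hsne : s.Nonempty := by
      rcases Set.eq_empty_or_nonempty s with h | h
      · exfalso
        obtain ⟨x⟩ := hne
        have := hsU ▸ Set.mem_univ x
        simp [h] at this
      · exact h
    obtain ⟨e, he⟩ := hsc.exists_eq_range hsne
    refine ⟨e, fun x => ?_⟩
    have hx : x ∈ ⋃ y ∈ s, Metric.ball y (ρ n y) := hsU ▸ Set.mem_univ x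
    rw [Set.mem_iUnion₂] at hx
    obtain ⟨y, hy, hxy⟩ := hx
    rw [he] at hy
    obtain ⟨i, rfl⟩ := hy
    exact ⟨i, hxy⟩
  choose e hecov using hcov
  -- the index of the first ball containing x, and the pieces of the partition
  set idx : ℕ → 𝒳 → ℕ := fun n x => Nat.find (hecov n x) with hidx
  set A : ℕ → ℕ → Set 𝒳 := fun n i => {x | idx n x = i} with hA
  have hmem : ∀ n x, x ∈ Metric.ball (e n (idx n x)) (ρ n (e n (idx n x))) :=
    fun n x => Nat.find_spec (hecov n x)
  have hAmeas : ∀ n i, MeasurableSet (A n i) := by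
    intro n i
    have : A n i = Metric.ball (e n i) (ρ n (e n i)) ∩
        ⋂ j ∈ Set.Iio i, (Metric.ball (e n j) (ρ n (e n j)))ᶜ := by
      ext x
      simp only [hA, Set.mem_setOf_eq, hidx, Nat.find_eq_iff, Set.mem_inter_iff,
        Set.mem_iInter, Set.mem_Iio, Set.mem_compl_iff]
    rw [this]
    exact Metric.isOpen_ball.measurableSet.inter
      (MeasurableSet.biInter (Set.to_countable _)
        fun j _ => Metric.isOpen_ball.measurableSet.compl)
  have hAdisj : ∀ n, Pairwise (Function.onFun Disjoint (A n)) := by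
    intro n i j hij
    refine Set.disjoint_left.mpr fun x hxi hxj => hij ?_
    simp only [hA, Set.mem_setOf_eq] at hxi hxj
    rw [← hxi, ← hxj]
  have hAunion : ∀ n, (⋃ i, A n i) = Set.univ := by
    intro n
    refine Set.eq_univ_of_forall fun x => Set.mem_iUnion.mpr ⟨idx n x, rfl⟩
  have hidxm : ∀ n, Measurable (idx n) := by
    intro n
    refine measurable_to_countable' fun i => ?_
    have : idx n ⁻¹' {i} = A n i := by ext x; simp [hA]
    rw [this]; exact hAmeas n i
  -- the pieces sit inside the independence neighbourhoods
  have hAsub : ∀ n i, A n i ⊆ V (e n i) := by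
    intro n i x hx
    have hx' : x ∈ Metric.ball (e n i) (ρ n (e n i)) := by
      have := hmem n x
      rwa [show idx n x = i from hx] at this
    exact hball (e n i) (Metric.ball_subset_ball (hρr n (e n i)) hx')
  -- partition formula for lower integrals of discretized functions
  have hpart : ∀ (n : ℕ) (ν : Measure 𝒳) (f : 𝒳 → ℝ≥0∞),
      ∫⁻ x, f (e n (idx n x)) ∂ν = ∑' i, f (e n i) * ν (A n i) := by
    intro n ν f
    calc ∫⁻ x, f (e n (idx n x)) ∂ν
        = ∫⁻ x in ⋃ i, A n i, f (e n (idx n x)) ∂ν := by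
          rw [hAunion n, Measure.restrict_univ]
      _ = ∑' i, ∫⁻ x in A n i, f (e n (idx n x)) ∂ν :=
          lintegral_iUnion (hAmeas n) (hAdisj n) _
      _ = ∑' i, f (e n i) * ν (A n i) := by
          refine tsum_congr fun i => ?_
          rw [setLIntegral_congr_fun (hAmeas n i)
            (fun x hx => by rw [show idx n x = i from hx]),
            setLIntegral_const]
  -- the key exact identity at each stage n
  have hstep : ∀ n, (∫⁻ ω, (∫⁻ x, ENNReal.ofReal (X ω (e n (idx n x))) ∂𝒩 ω) ∂P)
      = ∫⁻ x, (∫⁻ ω, ENNReal.ofReal (X ω (e n (idx n x))) ∂P) ∂μ := by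
    intro n
    have hgc : (fun x => ∫⁻ ω, ENNReal.ofReal (X ω (e n (idx n x))) ∂P)
        = fun x => (fun y => ∫⁻ ω, ENNReal.ofReal (X ω y) ∂P) (e n (idx n x)) := rfl
    calc ∫⁻ ω, (∫⁻ x, ENNReal.ofReal (X ω (e n (idx n x))) ∂𝒩 ω) ∂P
        = ∫⁻ ω, ∑' i, ENNReal.ofReal (X ω (e n i)) * 𝒩 ω (A n i) ∂P :=
          lintegral_congr fun ω => hpart n (𝒩 ω) fun y => ENNReal.ofReal (X ω y)
      _ = ∑' i, ∫⁻ ω, ENNReal.ofReal (X ω (e n i)) * 𝒩 ω (A n i) ∂P :=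
          lintegral_tsum fun i =>
            (((hXm _).ennreal_ofReal).mul (h𝒩meas _ (hAmeas n i))).aemeasurable
      _ = ∑' i, (∫⁻ ω, ENNReal.ofReal (X ω (e n i)) ∂P) * μ (A n i) := by
          refine tsum_congr fun i => ?_
          have hind : IndepFun (fun ω => ENNReal.ofReal (X ω (e n i)))
              (fun ω => 𝒩 ω (A n i)) P :=
            (hVind (e n i) (A n i) (hAsub n i) (hAmeas n i)).comp
              ENNReal.measurable_ofReal measurable_id
          rw [lintegral_mul_eq_lintegral_mul_lintegral_of_indepFun''
            ((hXm _).ennreal_ofReal).aemeasurable (h𝒩meas _ (hAmeas n i)).aemeasurable hind,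
            ← hμ _ (hAmeas n i)]
      _ = ∫⁻ x, (∫⁻ ω, ENNReal.ofReal (X ω (e n (idx n x))) ∂P) ∂μ := by
          rw [hgc]
          exact (hpart n μ fun y => ∫⁻ ω, ENNReal.ofReal (X ω y) ∂P).symm
  -- convergence of the centers
  have hdist : ∀ (n : ℕ) (x : 𝒳), dist (e n (idx n x)) x ≤ 1 / (n + 1) := by
    intro n x
    have h1 : dist x (e n (idx n x)) < ρ n (e n (idx n x)) := hmem n x
    rw [dist_comm]
    exact (h1.trans_le (hρn n _)).le
  have hctend : ∀ x : 𝒳, Tendsto (fun n => e n (idx n x)) atTop (𝓝 x) := by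
    intro x
    rw [tendsto_iff_dist_tendsto_zero]
    exact squeeze_zero (fun n => dist_nonneg) (fun n => hdist n x)
      tendsto_one_div_add_atTop_nhds_zero_nat
  have hXtend : ∀ ω x, Tendsto (fun n => ENNReal.ofReal (X ω (e n (idx n x)))) atTop
      (𝓝 (ENNReal.ofReal (X ω x))) := fun ω x =>
    (ENNReal.continuous_ofReal.tendsto _).comp (((hXc ω).tendsto x).comp (hctend x))
  -- finiteness of ∫ ofReal Y
  have hYfin : ∫⁻ ω, ENNReal.ofReal (Y ω) ∂P ≠ ⊤ := by
    refine ((lintegral_mono fun ω => Real.ofReal_le_enorm (Y ω)).trans_lt hY.2).ne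
  -- convergence of the ω-integrals at each point x
  have hgtend : ∀ x : 𝒳, Tendsto (fun n => ∫⁻ ω, ENNReal.ofReal (X ω (e n (idx n x))) ∂P)
      atTop (𝓝 (∫⁻ ω, ENNReal.ofReal (X ω x) ∂P)) := by
    intro x
    refine tendsto_lintegral_of_dominated_convergence (fun ω => ENNReal.ofReal (Y ω))
      (fun n => (hXm _).ennreal_ofReal) (fun n => ?_) hYfin
      (ae_of_all _ fun ω => hXtend ω x)
    filter_upwards [hdom] with ω hω
    exact ENNReal.ofReal_le_ofReal ((le_abs_self _).trans (hω _))
  -- convergence of the right-hand sides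
  have hRtend : Tendsto (fun n => ∫⁻ x, (∫⁻ ω, ENNReal.ofReal (X ω (e n (idx n x))) ∂P) ∂μ)
      atTop (𝓝 (∫⁻ x, (∫⁻ ω, ENNReal.ofReal (X ω x) ∂P) ∂μ)) := by
    refine tendsto_lintegral_of_dominated_convergence
      (fun _ => ∫⁻ ω, ENNReal.ofReal (Y ω) ∂P) (fun n => ?_) (fun n => ae_of_all _ fun x => ?_)
      ?_ (ae_of_all _ fun x => hgtend x)
    · exact (measurable_from_top (f := fun i => ∫⁻ ω, ENNReal.ofReal (X ω (e n i)) ∂P)).comp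
        (hidxm n)
    · refine lintegral_mono_ae ?_
      filter_upwards [hdom] with ω hω
      exact ENNReal.ofReal_le_ofReal ((le_abs_self _).trans (hω _))
    · rw [lintegral_const]
      exact ENNReal.mul_ne_top hYfin (measure_ne_top μ _)
  -- convergence of the left-hand sides
  have hfin2 : ∀ᵐ ω ∂P, ENNReal.ofReal (Y ω) * 𝒩 ω Set.univ < ⊤ := by
    refine ae_lt_top' ?_ hYN.ne
    exact ((ENNReal.measurable_ofReal.comp_aemeasurable hY.aemeasurable).mul
      (h𝒩meas _ MeasurableSet.univ).aemeasurable)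
  have hLtend : Tendsto (fun n => ∫⁻ ω, (∫⁻ x, ENNReal.ofReal (X ω (e n (idx n x))) ∂𝒩 ω) ∂P)
      atTop (𝓝 (∫⁻ ω, (∫⁻ x, ENNReal.ofReal (X ω x) ∂(𝒩 ω)) ∂P)) := by
    refine tendsto_lintegral_of_dominated_convergence
      (fun ω => ENNReal.ofReal (Y ω) * 𝒩 ω Set.univ) (fun n => ?_)
      (fun n => ?_) hYN.ne ?_
    · have heq : (fun ω => ∫⁻ x, ENNReal.ofReal (X ω (e n (idx n x))) ∂𝒩 ω)
          = fun ω => ∑' i, ENNReal.ofReal (X ω (e n i)) * 𝒩 ω (A n i) :=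
        funext fun ω => hpart n (𝒩 ω) fun y => ENNReal.ofReal (X ω y)
      rw [heq]
      exact Measurable.ennreal_tsum fun i =>
        ((hXm _).ennreal_ofReal).mul (h𝒩meas _ (hAmeas n i))
    · filter_upwards [hdom] with ω hω
      calc ∫⁻ x, ENNReal.ofReal (X ω (e n (idx n x))) ∂𝒩 ω
          ≤ ∫⁻ _, ENNReal.ofReal (Y ω) ∂𝒩 ω :=
            lintegral_mono fun x => ENNReal.ofReal_le_ofReal ((le_abs_self _).trans (hω _))
        _ = ENNReal.ofReal (Y ω) * 𝒩 ω Set.univ := lintegral_const _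
    · filter_upwards [hdom, hfin2] with ω hω hfinω
      refine tendsto_lintegral_of_dominated_convergence (fun _ => ENNReal.ofReal (Y ω))
        (fun n => ?_) (fun n => ae_of_all _ fun x =>
          ENNReal.ofReal_le_ofReal ((le_abs_self _).trans (hω _))) ?_
        (ae_of_all _ fun x => hXtend ω x)
      · exact ((hXc ω).measurable.comp
          ((measurable_from_top (f := e n)).comp (hidxm n))).ennreal_ofReal
      · rw [lintegral_const]
        exact hfinω.ne
  exact tendsto_nhds_unique hLtend (hRtend.congr fun n => (hstep n).symm)
end

section
/- Let X be a nonnegative process on [0,T] × 𝒳 (𝒳 Polish) that is càdlàg in the time variable and continuous in the space variable, and let 𝒩 be a random measure on [0,T] × 𝒳 with finite intensity measure μ. Suppose that for each s ∈ [0,T] the family (X_{s,x}, x ∈ 𝒳) is independent of the restriction of 𝒩 to [0,s] × 𝒳, that |X_{s,x}| ≤ Y for all (s,x) a.s. for some integrable Y, and that E[Y 𝒩([0,T]×𝒳)] < ∞. Then E[∫ X_{s,x} 𝒩(ds,dx)] = ∫ E[X_{s,x}] μ(ds,dx). -/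
open MeasureTheory ProbabilityTheory Filter Topology
open scoped ENNReal

lemma campbell_aux_left {Ω Q : Type*} [MeasurableSpace Ω] [MeasurableSpace Q]
    (P : Measure Ω) (ν : Ω → Measure Q)
    (g : ℕ → Ω → Q → ℝ≥0∞) (f : Ω → Q → ℝ≥0∞) (B : Ω → ℝ≥0∞)
    (hmeas : ∀ i, AEMeasurable (fun ω => ∫⁻ q, g i ω q ∂ν ω) P)
    (hmeasq : ∀ᵐ ω ∂P, ∀ i, AEMeasurable (g i ω) (ν ω))
    (hbound : ∀ᵐ ω ∂P, ∀ i q, g i ω q ≤ B ω)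
    (hBm : AEMeasurable (fun ω => B ω * ν ω Set.univ) P)
    (hB : ∫⁻ ω, B ω * ν ω Set.univ ∂P < ⊤)
    (hlim : ∀ᵐ ω ∂P, ∀ᵐ q ∂(ν ω), Tendsto (fun i => g i ω q) atTop (𝓝 (f ω q))) :
    Tendsto (fun i => ∫⁻ ω, ∫⁻ q, g i ω q ∂ν ω ∂P) atTop
      (𝓝 (∫⁻ ω, ∫⁻ q, f ω q ∂ν ω ∂P)) ∧
    AEMeasurable (fun ω => ∫⁻ q, f ω q ∂ν ω) P := by
  have hBae : ∀ᵐ ω ∂P, B ω * ν ω Set.univ < ⊤ := ae_lt_top' hBm hB.ne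
  have key : ∀ᵐ ω ∂P, Tendsto (fun i => ∫⁻ q, g i ω q ∂ν ω) atTop
      (𝓝 (∫⁻ q, f ω q ∂ν ω)) := by
    filter_upwards [hmeasq, hbound, hlim, hBae] with ω h1 h2 h3 h4
    refine tendsto_lintegral_of_dominated_convergence' (fun _ => B ω) h1
      (fun i => ae_of_all _ fun q => h2 i q) ?_ h3
    rw [lintegral_const]
    exact h4.ne
  have hmeasf : AEMeasurable (fun ω => ∫⁻ q, f ω q ∂ν ω) P :=
    aemeasurable_of_tendsto_metrizable_ae atTop hmeas key
  refine ⟨?_, hmeasf⟩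
  refine tendsto_lintegral_of_dominated_convergence' (fun ω => B ω * ν ω Set.univ)
    hmeas (fun i => ?_) hB.ne key
  filter_upwards [hbound] with ω h2
  calc ∫⁻ q, g i ω q ∂ν ω ≤ ∫⁻ _, B ω ∂ν ω := lintegral_mono fun q => h2 i q
  _ = B ω * ν ω Set.univ := lintegral_const _

lemma campbell_aux_right {Ω Q : Type*} [MeasurableSpace Ω] [MeasurableSpace Q]
    (P : Measure Ω) (μ : Measure Q) [IsFiniteMeasure μ]
    (g : ℕ → Ω → Q → ℝ≥0∞) (f : Ω → Q → ℝ≥0∞) (B : Ω → ℝ≥0∞)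
    (hmeas : ∀ i, AEMeasurable (fun q => ∫⁻ ω, g i ω q ∂P) μ)
    (hmeasω : ∀ i q, AEMeasurable (fun ω => g i ω q) P)
    (hbound : ∀ᵐ ω ∂P, ∀ i q, g i ω q ≤ B ω)
    (hB : ∫⁻ ω, B ω ∂P < ⊤)
    (hlim : ∀ᵐ q ∂μ, ∀ᵐ ω ∂P, Tendsto (fun i => g i ω q) atTop (𝓝 (f ω q))) :
    Tendsto (fun i => ∫⁻ q, ∫⁻ ω, g i ω q ∂P ∂μ) atTop
      (𝓝 (∫⁻ q, ∫⁻ ω, f ω q ∂P ∂μ)) ∧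
    AEMeasurable (fun q => ∫⁻ ω, f ω q ∂P) μ := by
  have key : ∀ᵐ q ∂μ, Tendsto (fun i => ∫⁻ ω, g i ω q ∂P) atTop
      (𝓝 (∫⁻ ω, f ω q ∂P)) := by
    filter_upwards [hlim] with q h3
    refine tendsto_lintegral_of_dominated_convergence' (fun ω => B ω)
      (fun i => hmeasω i q) (fun i => ?_) hB.ne h3
    filter_upwards [hbound] with ω h2
    exact h2 i q
  have hmeasf : AEMeasurable (fun q => ∫⁻ ω, f ω q ∂P) μ :=
    aemeasurable_of_tendsto_metrizable_ae atTop hmeas key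
  refine ⟨?_, hmeasf⟩
  refine tendsto_lintegral_of_dominated_convergence' (fun _ => ∫⁻ ω, B ω ∂P)
    hmeas (fun i => ae_of_all _ fun q => ?_) ?_ key
  · refine lintegral_mono_ae ?_
    filter_upwards [hbound] with ω h2
    exact h2 i q
  · rw [lintegral_const]
    exact (ENNReal.mul_lt_top hB (measure_lt_top μ _)).ne

section cells

lemma campbell_sum_indicator_le {α ι : Type*} (a : α) (s : Finset ι) (A : ι → Set α)
    (hd : ∀ i j, i ≠ j → Disjoint (A i) (A j)) (c : ι → α → ℝ≥0∞) {C : ℝ≥0∞}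
    (hc : ∀ i, ∀ a ∈ A i, c i a ≤ C) :
    (∑ i ∈ s, (A i).indicator (c i) a) ≤ C := by
  by_cases hex : ∃ i ∈ s, a ∈ A i
  · obtain ⟨i0, hi0, ha⟩ := hex
    rw [Finset.sum_eq_single_of_mem i0 hi0 (fun b hb hne => Set.indicator_of_notMem
      (fun hmem => (hd b i0 hne).ne_of_mem hmem ha rfl) _)]
    rw [Set.indicator_of_mem ha]
    exact hc i0 a ha
  · rw [Finset.sum_eq_zero fun i hi => Set.indicator_of_notMem
      (fun h => hex ⟨i, hi, h⟩) _]
    exact zero_le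

lemma campbell_tsum_indicator_le {α : Type*} (a : α) (A : ℕ → Set α)
    (hd : ∀ i j, i ≠ j → Disjoint (A i) (A j)) (c : ℕ → α → ℝ≥0∞) {C : ℝ≥0∞}
    (hc : ∀ i, ∀ a ∈ A i, c i a ≤ C) :
    (∑' i, (A i).indicator (c i) a) ≤ C := by
  by_cases hex : ∃ i, a ∈ A i
  · obtain ⟨i0, ha⟩ := hex
    rw [tsum_eq_single i0 (fun b hne => Set.indicator_of_notMem
      (fun hmem => (hd b i0 hne).ne_of_mem hmem ha rfl) _)]
    rw [Set.indicator_of_mem ha]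
    exact hc i0 a ha
  · have : ∀ i, (A i).indicator (c i) a = 0 := fun i =>
      Set.indicator_of_notMem (fun h => hex ⟨i, h⟩) _
    simp only [this, tsum_zero]
    exact zero_le

/-- time cells -/
noncomputable def tcell (T : ℝ) (n k : ℕ) : Set ℝ :=
  if k = 0 then {0} else Set.Ioc (((k : ℝ) - 1) * (T / (n + 1))) ((k : ℝ) * (T / (n + 1)))

noncomputable def tpt (T : ℝ) (n k : ℕ) : ℝ := (k : ℝ) * (T / (n + 1))

variable {T : ℝ} (hT : 0 < T) {n : ℕ}

lemma tcell_measurable (n k : ℕ) : MeasurableSet (tcell T n k) := by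
  unfold tcell; split <;> measurability

include hT

lemma tcell_disjoint : ∀ k l : ℕ, k ≠ l → Disjoint (tcell T n k) (tcell T n l) := by
  have hδ : 0 < T / (n + 1) := by positivity
  have key : ∀ k l : ℕ, k < l → Disjoint (tcell T n k) (tcell T n l) := by
    intro k l hkl
    rw [Set.disjoint_left]
    intro s hs hs'
    unfold tcell at hs hs'
    have hl0 : l ≠ 0 := by omega
    rw [if_neg hl0] at hs'
    have h1 : ((l : ℝ) - 1) * (T / (n + 1)) < s := hs'.1
    have h2 : s ≤ (k : ℝ) * (T / (n + 1)) := by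
      by_cases hk : k = 0
      · rw [if_pos hk] at hs
        simp only [Set.mem_singleton_iff] at hs
        subst hs; simp [hk]
      · rw [if_neg hk] at hs
        exact hs.2
    have hkl' : (k : ℝ) ≤ (l : ℝ) - 1 := by
      have : (k : ℝ) + 1 ≤ (l : ℝ) := by exact_mod_cast hkl
      linarith
    nlinarith [mul_le_mul_of_nonneg_right hkl' hδ.le]
  intro k l hkl
  rcases lt_or_gt_of_ne hkl with h | h
  · exact key k l h
  · exact (key l k h).symm

lemma tcell_exists {s : ℝ} (hs : s ∈ Set.Icc 0 T) (n : ℕ) :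
    ∃ k ∈ Finset.range (n + 2), s ∈ tcell T n k := by
  have hδ : 0 < T / (n + 1) := by positivity
  rcases eq_or_lt_of_le hs.1 with h0 | h0
  · exact ⟨0, by simp, by simp [tcell, ← h0]⟩
  · set k := ⌈s / (T / (n + 1))⌉₊ with hk
    have hk1 : 1 ≤ k := by
      rw [hk, Nat.one_le_ceil_iff]
      positivity
    have hkn : k ≤ n + 1 := by
      rw [hk, Nat.ceil_le]
      rw [div_le_iff₀ hδ]
      calc s ≤ T := hs.2
      _ = (n + 1) * (T / (n + 1)) := by field_simp
      _ = (↑(n + 1) : ℝ) * (T / (n + 1)) := by push_cast; ring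
    refine ⟨k, Finset.mem_range.2 (by omega), ?_⟩
    have hk0 : k ≠ 0 := by omega
    rw [tcell, if_neg hk0]
    constructor
    · have := Nat.ceil_lt_add_one (a := s / (T / (n + 1))) (by positivity)
      rw [← hk] at this
      have h2 : ((k : ℝ) - 1) < s / (T / (n + 1)) := by linarith
      calc ((k : ℝ) - 1) * (T / (n + 1)) < s / (T / (n + 1)) * (T / (n + 1)) :=
        mul_lt_mul_of_pos_right h2 hδ
      _ = s := by field_simp
    · have := Nat.le_ceil (s / (T / (n + 1)))
      rw [← hk] at this
      calc s = s / (T / (n + 1)) * (T / (n + 1)) := by field_simp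
      _ ≤ (k : ℝ) * (T / (n + 1)) := mul_le_mul_of_nonneg_right this hδ.le

lemma tcell_le_tpt {s : ℝ} {k : ℕ} (h : s ∈ tcell T n k) :
    s ≤ tpt T n k ∧ tpt T n k ≤ s + T / (n + 1) := by
  unfold tcell at h
  unfold tpt
  by_cases hk : k = 0
  · rw [if_pos hk] at h
    simp only [Set.mem_singleton_iff] at h
    subst h
    have : 0 < T / (n+1) := by positivity
    simp [hk]
    positivity
  · rw [if_neg hk] at h
    constructor
    · exact h.2
    · have := h.1
      nlinarith [h.1]

lemma tpt_mem {k : ℕ} (hk : k ≤ n + 1) : tpt T n k ∈ Set.Icc (0 : ℝ) T := by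
  have hδ : 0 < T / (n + 1) := by positivity
  constructor
  · unfold tpt; positivity
  · unfold tpt
    have h1 : (k : ℝ) ≤ (n : ℝ) + 1 := by exact_mod_cast hk
    have h2 : ((n : ℝ) + 1) * (T / (n + 1)) = T := by field_simp
    nlinarith [mul_le_mul_of_nonneg_right h1 hδ.le]

lemma tcell_subset {k : ℕ} : tcell T n k ⊆ Set.Icc 0 (tpt T n k) := by
  have hδ : 0 < T / (n + 1) := by positivity
  intro s hs
  unfold tcell at hs
  unfold tpt
  by_cases hk : k = 0
  · rw [if_pos hk] at hs
    simp only [Set.mem_singleton_iff] at hs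
    subst hs
    simp [hk]
  · rw [if_neg hk] at hs
    rw [Set.mem_Icc]
    refine ⟨le_of_lt (lt_of_le_of_lt ?_ hs.1), hs.2⟩
    have hk1 : (1 : ℝ) ≤ (k : ℝ) := by exact_mod_cast Nat.one_le_iff_ne_zero.2 hk
    nlinarith

end cells

section xcells

variable {𝒳 : Type*} [MetricSpace 𝒳]

/-- space cells -/
def xcell (u : ℕ → 𝒳) (m j : ℕ) : Set 𝒳 :=
  Metric.ball (u j) (1 / (m + 1)) \ ⋃ (i : ℕ) (_ : i < j), Metric.ball (u i) (1 / (m + 1))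

lemma xcell_measurable [MeasurableSpace 𝒳] [OpensMeasurableSpace 𝒳] (u : ℕ → 𝒳) (m j : ℕ) :
    MeasurableSet (xcell u m j) :=
  measurableSet_ball.diff (MeasurableSet.iUnion fun _ =>
    MeasurableSet.iUnion fun _ => measurableSet_ball)

lemma xcell_disjoint (u : ℕ → 𝒳) (m : ℕ) :
    ∀ i j : ℕ, i ≠ j → Disjoint (xcell u m i) (xcell u m j) := by
  have key : ∀ i j : ℕ, i < j → Disjoint (xcell u m i) (xcell u m j) := by
    intro i j hij
    rw [Set.disjoint_left]
    rintro x ⟨hxb, -⟩ ⟨-, hxn⟩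
    exact hxn (Set.mem_iUnion.2 ⟨i, Set.mem_iUnion.2 ⟨hij, hxb⟩⟩)
  intro i j hij
  rcases lt_or_gt_of_ne hij with h | h
  · exact key i j h
  · exact (key j i h).symm

open Classical in
noncomputable def jdx (u : ℕ → 𝒳) (hu : DenseRange u) (m : ℕ) (x : 𝒳) : ℕ :=
  Nat.find (p := fun j => x ∈ Metric.ball (u j) (1 / (m + 1)))
    (by
      obtain ⟨j, hj⟩ := hu.exists_dist_lt x (by positivity : (0:ℝ) < 1 / (m + 1))
      exact ⟨j, Metric.mem_ball.2 hj⟩)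

open Classical in
lemma jdx_mem (u : ℕ → 𝒳) (hu : DenseRange u) (m : ℕ) (x : 𝒳) :
    x ∈ xcell u m (jdx u hu m x) := by
  constructor
  · exact Nat.find_spec (p := fun j => x ∈ Metric.ball (u j) (1 / (m + 1))) _
  · intro hx
    simp only [Set.mem_iUnion] at hx
    obtain ⟨i, hi, hball⟩ := hx
    exact Nat.find_min (p := fun j => x ∈ Metric.ball (u j) (1 / (m + 1))) _ hi hball

open Classical in
lemma jdx_dist (u : ℕ → 𝒳) (hu : DenseRange u) (m : ℕ) (x : 𝒳) :
    dist x (u (jdx u hu m x)) < 1 / (m + 1) :=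
  Metric.mem_ball.1 (Nat.find_spec (p := fun j => x ∈ Metric.ball (u j) (1 / (m + 1))) _)

lemma jdx_tendsto (u : ℕ → 𝒳) (hu : DenseRange u) (x : 𝒳) :
    Tendsto (fun m => u (jdx u hu m x)) atTop (𝓝 x) := by
  rw [tendsto_iff_dist_tendsto_zero]
  refine squeeze_zero (g := fun m : ℕ => 1 / ((m : ℝ) + 1)) (fun m => dist_nonneg)
    (fun m => le_of_lt (by rw [dist_comm]; exact jdx_dist u hu m x)) ?_
  exact tendsto_one_div_add_atTop_nhds_zero_nat
end xcells
/-- Extended Campbell formula for time-indexed processes: if `X` on `[0,T] × 𝒳` is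
càdlàg in time, continuous in space, for each `s` the family `(X_{s,x})_x` is
independent of the restriction of the random measure `𝒩` to `[0,s] × 𝒳`, and `X` is
dominated by an integrable `Y` with `E[Y 𝒩([0,T]×𝒳)] < ∞`, then
`E[∫ X_{s,x} 𝒩(ds,dx)] = ∫ E[X_{s,x}] μ(ds,dx)`. -/
theorem campbell_time_indexed
    {Ω : Type*} [MeasurableSpace Ω] (P : Measure Ω) [IsProbabilityMeasure P]
    {𝒳 : Type*} [TopologicalSpace 𝒳] [PolishSpace 𝒳] [MeasurableSpace 𝒳] [BorelSpace 𝒳]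
    (T : ℝ) (hT : 0 < T)
    (𝒩 : Ω → Measure (ℝ × 𝒳))
    (h𝒩meas : ∀ B : Set (ℝ × 𝒳), MeasurableSet B → Measurable fun ω => 𝒩 ω B)
    (h𝒩supp : ∀ ω, 𝒩 ω (Set.Icc (0:ℝ) T ×ˢ (Set.univ : Set 𝒳))ᶜ = 0)
    (μ : Measure (ℝ × 𝒳)) [IsFiniteMeasure μ]
    (hμ : ∀ B : Set (ℝ × 𝒳), MeasurableSet B → μ B = ∫⁻ ω, 𝒩 ω B ∂P)
    (X : Ω → ℝ → 𝒳 → ℝ)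
    (hXnn : ∀ ω s x, 0 ≤ X ω s x)
    (hXm : ∀ s x, Measurable fun ω => X ω s x)
    (hX_rightCont : ∀ ω x s, ContinuousWithinAt (fun u => X ω u x) (Set.Ici s) s)
    (hX_leftLim : ∀ ω x s, 0 < s →
      ∃ l : ℝ, Tendsto (fun u => X ω u x) (nhdsWithin s (Set.Iio s)) (nhds l))
    (hXc : ∀ ω s, Continuous (X ω s))
    (hindep : ∀ s ∈ Set.Icc (0:ℝ) T,
      IndepFun (fun ω => fun x => X ω s x)
        (fun ω => (𝒩 ω).restrict (Set.Icc (0:ℝ) s ×ˢ (Set.univ : Set 𝒳))) P)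
    (Y : Ω → ℝ) (hY : Integrable Y P)
    (hdom : ∀ᵐ ω ∂P, ∀ s x, |X ω s x| ≤ Y ω)
    (hYN : ∫⁻ ω, ENNReal.ofReal (Y ω) * 𝒩 ω Set.univ ∂P < ⊤) :
    ∫⁻ ω, (∫⁻ q, ENNReal.ofReal (X ω q.1 q.2) ∂(𝒩 ω)) ∂P
      = ∫⁻ q, (∫⁻ ω, ENNReal.ofReal (X ω q.1 q.2) ∂P) ∂μ := by
  classical
  rcases isEmpty_or_nonempty 𝒳 with hE | hNe
  · haveI : IsEmpty (ℝ × 𝒳) := ⟨fun q => hE.false q.2⟩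
    have hμ0 : μ = 0 := Measure.eq_zero_of_isEmpty μ
    have h𝒩0 : ∀ ω, 𝒩 ω = 0 := fun ω => Measure.eq_zero_of_isEmpty _
    simp [hμ0, h𝒩0]
  letI := TopologicalSpace.upgradeIsCompletelyMetrizable 𝒳
  obtain ⟨u, hu⟩ := TopologicalSpace.exists_dense_seq 𝒳
  set S : Set (ℝ × 𝒳) := Set.Icc (0:ℝ) T ×ˢ (Set.univ : Set 𝒳) with hS
  have hSmeas : MeasurableSet S := measurableSet_Icc.prod MeasurableSet.univ
  have h𝒩S : ∀ ω, ∀ᵐ q ∂𝒩 ω, q ∈ S := fun ω => mem_ae_iff.mpr (h𝒩supp ω)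
  have hμS : ∀ᵐ q ∂μ, q ∈ S := by
    have h0 : μ Sᶜ = 0 := by
      rw [hμ _ hSmeas.compl]
      simp only [h𝒩supp]
      exact lintegral_zero
    exact mem_ae_iff.mpr h0
  -- cells
  set A : ℕ → ℕ → ℕ → ℕ → Set (ℝ × 𝒳) :=
    fun n m k j => tcell T n k ×ˢ xcell u m j with hA
  have hAmeas : ∀ n m k j, MeasurableSet (A n m k j) :=
    fun n m k j => (tcell_measurable n k).prod (xcell_measurable u m j)
  have hAdisjx : ∀ n m k, ∀ i j : ℕ, i ≠ j → Disjoint (A n m k i) (A n m k j) :=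
    fun n m k i j hij => Set.Disjoint.set_prod_right (xcell_disjoint u m i j hij) _ _
  -- the approximating processes
  set g : ℕ → ℕ → Ω → ℝ × 𝒳 → ℝ≥0∞ := fun n m ω q =>
    ∑ k ∈ Finset.range (n + 2), ∑' j : ℕ,
      (A n m k j).indicator (fun _ => ENNReal.ofReal (X ω (tpt T n k) (u j))) q with hg
  set h' : ℕ → Ω → ℝ × 𝒳 → ℝ≥0∞ := fun n ω q =>
    ∑ k ∈ Finset.range (n + 2),
      (tcell T n k ×ˢ (Set.univ : Set 𝒳)).indicator
        (fun q' => ENNReal.ofReal (X ω (tpt T n k) q'.2)) q with hh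
  -- measurability in q
  have hgq : ∀ n m ω, Measurable (g n m ω) := by
    intro n m ω
    refine Finset.measurable_sum _ fun k _ => Measurable.ennreal_tsum fun j => ?_
    exact measurable_const.indicator (hAmeas n m k j)
  have hhq : ∀ n ω, Measurable (h' n ω) := by
    intro n ω
    refine Finset.measurable_sum _ fun k _ => Measurable.indicator ?_
      ((tcell_measurable n k).prod MeasurableSet.univ)
    exact ((hXc ω (tpt T n k)).comp continuous_snd).measurable.ennreal_ofReal
  -- measurability in ω
  have hgω : ∀ n m q, Measurable (fun ω => g n m ω q) := by
    intro n m q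
    refine Finset.measurable_sum _ fun k _ => Measurable.ennreal_tsum fun j => ?_
    by_cases hq : q ∈ A n m k j
    · simp only [Set.indicator_of_mem hq]
      exact (hXm _ _).ennreal_ofReal
    · simp only [Set.indicator_of_notMem hq]
      exact measurable_const
  have hhω : ∀ n q, Measurable (fun ω => h' n ω q) := by
    intro n q
    refine Finset.measurable_sum _ fun k _ => ?_
    by_cases hq : q ∈ tcell T n k ×ˢ (Set.univ : Set 𝒳)
    · simp only [Set.indicator_of_mem hq]
      exact (hXm _ _).ennreal_ofReal
    · simp only [Set.indicator_of_notMem hq]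
      exact measurable_const
  -- computation C1
  have C1 : ∀ n m ω, ∫⁻ q, g n m ω q ∂𝒩 ω
      = ∑ k ∈ Finset.range (n + 2), ∑' j : ℕ,
          ENNReal.ofReal (X ω (tpt T n k) (u j)) * 𝒩 ω (A n m k j) := by
    intro n m ω
    rw [lintegral_finset_sum' _ (fun k _ => (Measurable.ennreal_tsum fun j =>
      measurable_const.indicator (hAmeas n m k j)).aemeasurable)]
    refine Finset.sum_congr rfl fun k _ => ?_
    rw [lintegral_tsum fun j => (measurable_const.indicator (hAmeas n m k j)).aemeasurable]
    exact tsum_congr fun j => lintegral_indicator_const (hAmeas n m k j) _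
  have hFmeas : ∀ n m, Measurable (fun ω => ∫⁻ q, g n m ω q ∂𝒩 ω) := by
    intro n m
    have : (fun ω => ∫⁻ q, g n m ω q ∂𝒩 ω)
        = fun ω => ∑ k ∈ Finset.range (n + 2), ∑' j : ℕ,
            ENNReal.ofReal (X ω (tpt T n k) (u j)) * 𝒩 ω (A n m k j) :=
      funext (C1 n m)
    rw [this]
    exact Finset.measurable_sum _ fun k _ => Measurable.ennreal_tsum fun j =>
      ((hXm _ _).ennreal_ofReal.mul (h𝒩meas _ (hAmeas n m k j)))
  -- computation C2
  have C2 : ∀ n m q, ∫⁻ ω, g n m ω q ∂P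
      = ∑ k ∈ Finset.range (n + 2), ∑' j : ℕ,
          (A n m k j).indicator
            (fun _ => ∫⁻ ω, ENNReal.ofReal (X ω (tpt T n k) (u j)) ∂P) q := by
    intro n m q
    rw [lintegral_finset_sum' _ (fun k _ => Measurable.aemeasurable ?_)]
    swap
    · refine Measurable.ennreal_tsum fun j => ?_
      by_cases hq : q ∈ A n m k j
      · simp only [Set.indicator_of_mem hq]; exact (hXm _ _).ennreal_ofReal
      · simp only [Set.indicator_of_notMem hq]; exact measurable_const
    refine Finset.sum_congr rfl fun k _ => ?_
    rw [lintegral_tsum fun j => Measurable.aemeasurable ?_]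
    swap
    · by_cases hq : q ∈ A n m k j
      · simp only [Set.indicator_of_mem hq]; exact (hXm _ _).ennreal_ofReal
      · simp only [Set.indicator_of_notMem hq]; exact measurable_const
    refine tsum_congr fun j => ?_
    by_cases hq : q ∈ A n m k j
    · simp only [Set.indicator_of_mem hq]
    · simp only [Set.indicator_of_notMem hq, lintegral_zero]
  have hGmeas : ∀ n m, Measurable (fun q => ∫⁻ ω, g n m ω q ∂P) := by
    intro n m
    have : (fun q => ∫⁻ ω, g n m ω q ∂P)
        = fun q => ∑ k ∈ Finset.range (n + 2), ∑' j : ℕ,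
            (A n m k j).indicator
              (fun _ => ∫⁻ ω, ENNReal.ofReal (X ω (tpt T n k) (u j)) ∂P) q :=
      funext (C2 n m)
    rw [this]
    exact Finset.measurable_sum _ fun k _ => Measurable.ennreal_tsum fun j =>
      measurable_const.indicator (hAmeas n m k j)
  -- the key identity for fixed n, m
  have C3 : ∀ n m, ∫⁻ ω, ∫⁻ q, g n m ω q ∂𝒩 ω ∂P = ∫⁻ q, ∫⁻ ω, g n m ω q ∂P ∂μ := by
    intro n m
    rw [lintegral_congr (C1 n m), lintegral_congr (C2 n m)]
    rw [lintegral_finset_sum' _ (fun k _ => (Measurable.ennreal_tsum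
      (f := fun j ω => ENNReal.ofReal (X ω (tpt T n k) (u j)) * 𝒩 ω (A n m k j)) fun j =>
      ((hXm _ _).ennreal_ofReal.mul (h𝒩meas _ (hAmeas n m k j)))).aemeasurable)]
    rw [lintegral_finset_sum' _ (fun k _ => (Measurable.ennreal_tsum fun j =>
      measurable_const.indicator (hAmeas n m k j)).aemeasurable)]
    refine Finset.sum_congr rfl fun k hk => ?_
    rw [lintegral_tsum (f := fun j ω => ENNReal.ofReal (X ω (tpt T n k) (u j)) * 𝒩 ω (A n m k j))
      fun j => ((hXm _ _).ennreal_ofReal.mul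
      (h𝒩meas _ (hAmeas n m k j))).aemeasurable]
    rw [lintegral_tsum fun j => (measurable_const.indicator (hAmeas n m k j)).aemeasurable]
    refine tsum_congr fun j => ?_
    have hkn : k ≤ n + 1 := by
      have := Finset.mem_range.1 hk; omega
    have hti : tpt T n k ∈ Set.Icc (0:ℝ) T := tpt_mem hT hkn
    have hsub : A n m k j ⊆ Set.Icc (0:ℝ) (tpt T n k) ×ˢ (Set.univ : Set 𝒳) :=
      Set.prod_mono (tcell_subset hT) (Set.subset_univ _)
    have hind : IndepFun (fun ω => ENNReal.ofReal (X ω (tpt T n k) (u j)))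
        (fun ω => 𝒩 ω (A n m k j)) P := by
      have h1 := (hindep _ hti).comp
        (φ := fun c : 𝒳 → ℝ => ENNReal.ofReal (c (u j)))
        (ψ := fun ν : Measure (ℝ × 𝒳) => ν (A n m k j))
        ((measurable_pi_apply (u j)).ennreal_ofReal)
        (Measure.measurable_coe (hAmeas n m k j))
      have h2 : (fun ν : Measure (ℝ × 𝒳) => ν (A n m k j)) ∘
          (fun ω => (𝒩 ω).restrict (Set.Icc (0:ℝ) (tpt T n k) ×ˢ (Set.univ : Set 𝒳)))
          = fun ω => 𝒩 ω (A n m k j) := by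
        funext ω
        simp only [Function.comp_apply]
        rw [Measure.restrict_apply (hAmeas n m k j),
          Set.inter_eq_self_of_subset_left hsub]
      rwa [h2] at h1
    have hmul := lintegral_mul_eq_lintegral_mul_lintegral_of_indepFun
      ((hXm (tpt T n k) (u j)).ennreal_ofReal) (h𝒩meas _ (hAmeas n m k j)) hind
    have hμA : μ (A n m k j) = ∫⁻ ω, 𝒩 ω (A n m k j) ∂P := hμ _ (hAmeas n m k j)
    rw [lintegral_indicator_const (hAmeas n m k j), hμA]
    exact hmul
  -- bounds
  have hgbound : ∀ᵐ ω ∂P, ∀ n m (q : ℝ × 𝒳), g n m ω q ≤ ENNReal.ofReal (Y ω) := by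
    filter_upwards [hdom] with ω hω
    intro n m q
    have step1 : ∀ k ∈ Finset.range (n + 2),
        (∑' j : ℕ, (A n m k j).indicator
          (fun _ => ENNReal.ofReal (X ω (tpt T n k) (u j))) q)
        ≤ (tcell T n k ×ˢ (Set.univ : Set 𝒳)).indicator
            (fun _ => ENNReal.ofReal (Y ω)) q := by
      intro k _
      by_cases hq : q.1 ∈ tcell T n k
      · have hmem : q ∈ tcell T n k ×ˢ (Set.univ : Set 𝒳) := ⟨hq, trivial⟩
        rw [Set.indicator_of_mem hmem]
        refine campbell_tsum_indicator_le q (A n m k) (hAdisjx n m k) _ fun j a _ => ?_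
        exact ENNReal.ofReal_le_ofReal ((le_abs_self _).trans (hω _ _))
      · have : ∀ j : ℕ, (A n m k j).indicator
            (fun _ => ENNReal.ofReal (X ω (tpt T n k) (u j))) q = 0 := fun j =>
          Set.indicator_of_notMem (fun hmem => hq hmem.1) _
        simp only [this, tsum_zero]
        exact zero_le
    calc g n m ω q ≤ ∑ k ∈ Finset.range (n + 2),
        (tcell T n k ×ˢ (Set.univ : Set 𝒳)).indicator
          (fun _ => ENNReal.ofReal (Y ω)) q := Finset.sum_le_sum step1
    _ ≤ ENNReal.ofReal (Y ω) := by
        refine campbell_sum_indicator_le q _ _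
          (fun i j hij => Set.Disjoint.set_prod_left (tcell_disjoint hT i j hij) _ _)
          _ fun i a _ => le_rfl
  have hhbound : ∀ᵐ ω ∂P, ∀ n (q : ℝ × 𝒳), h' n ω q ≤ ENNReal.ofReal (Y ω) := by
    filter_upwards [hdom] with ω hω
    intro n q
    refine campbell_sum_indicator_le q _ _
      (fun i j hij => Set.Disjoint.set_prod_left (tcell_disjoint hT i j hij) _ _)
      _ fun i a _ => ?_
    exact ENNReal.ofReal_le_ofReal ((le_abs_self _).trans (hω _ _))
  -- evaluation
  have heval_h : ∀ n ω (q : ℝ × 𝒳) k, k ∈ Finset.range (n + 2) → q.1 ∈ tcell T n k →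
      h' n ω q = ENNReal.ofReal (X ω (tpt T n k) q.2) := by
    intro n ω q k hk hq
    simp only [hh]
    rw [Finset.sum_eq_single_of_mem k hk (fun b _ hb => Set.indicator_of_notMem
      (fun hmem => (tcell_disjoint hT b k hb).ne_of_mem hmem.1 hq rfl) _)]
    have hmem : q ∈ tcell T n k ×ˢ (Set.univ : Set 𝒳) := ⟨hq, trivial⟩
    rw [Set.indicator_of_mem hmem]
  have heval_g : ∀ n m ω (q : ℝ × 𝒳) k, k ∈ Finset.range (n + 2) → q.1 ∈ tcell T n k →
      g n m ω q = ENNReal.ofReal (X ω (tpt T n k) (u (jdx u hu m q.2))) := by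
    intro n m ω q k hk hq
    simp only [hg]
    have hzero : ∀ b ∈ Finset.range (n + 2), b ≠ k →
        (∑' j : ℕ, (A n m b j).indicator
          (fun _ => ENNReal.ofReal (X ω (tpt T n b) (u j))) q) = 0 := by
      intro b _ hb
      have : ∀ j : ℕ, (A n m b j).indicator
          (fun _ => ENNReal.ofReal (X ω (tpt T n b) (u j))) q = 0 := fun j =>
        Set.indicator_of_notMem
          (fun hmem => (tcell_disjoint hT b k hb).ne_of_mem hmem.1 hq rfl) _
      simp only [this, tsum_zero]
    rw [Finset.sum_eq_single_of_mem k hk hzero]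
    rw [tsum_eq_single (jdx u hu m q.2) (fun b hb => Set.indicator_of_notMem
      (fun hmem => (xcell_disjoint u m b _ hb).ne_of_mem hmem.2 (jdx_mem u hu m q.2) rfl) _)]
    have hmem : q ∈ A n m k (jdx u hu m q.2) := ⟨hq, jdx_mem u hu m q.2⟩
    rw [Set.indicator_of_mem hmem]
  -- limits
  have hlim1 : ∀ n ω, ∀ q ∈ S, Tendsto (fun m => g n m ω q) atTop (𝓝 (h' n ω q)) := by
    intro n ω q hqS
    obtain ⟨k, hk, hqk⟩ := tcell_exists hT hqS.1 n
    rw [heval_h n ω q k hk hqk]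
    have heq : (fun m => g n m ω q)
        = fun m => ENNReal.ofReal (X ω (tpt T n k) (u (jdx u hu m q.2))) :=
      funext fun m => heval_g n m ω q k hk hqk
    rw [heq]
    exact (ENNReal.continuous_ofReal.tendsto _).comp
      (((hXc ω (tpt T n k)).tendsto q.2).comp (jdx_tendsto u hu q.2))
  have hlim2 : ∀ ω, ∀ q ∈ S, Tendsto (fun n => h' n ω q) atTop
      (𝓝 (ENNReal.ofReal (X ω q.1 q.2))) := by
    intro ω q hqS
    choose κ hκmem hκcell using fun n => tcell_exists hT hqS.1 n
    have heq : (fun n => h' n ω q) = fun n => ENNReal.ofReal (X ω (tpt T n (κ n)) q.2) :=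
      funext fun n => heval_h n ω q (κ n) (hκmem n) (hκcell n)
    rw [heq]
    have hb := fun n => tcell_le_tpt hT (hκcell n)
    have htend : Tendsto (fun n => tpt T n (κ n)) atTop (𝓝[Set.Ici q.1] q.1) := by
      refine tendsto_nhdsWithin_of_tendsto_nhds_of_eventually_within _ ?_
        (Eventually.of_forall fun n => (hb n).1)
      have hupper : Tendsto (fun n : ℕ => q.1 + T / (n + 1)) atTop (𝓝 q.1) := by
        have h0 : Tendsto (fun n : ℕ => T * (1 / ((n : ℝ) + 1))) atTop (𝓝 (T * 0)) :=
          tendsto_one_div_add_atTop_nhds_zero_nat.const_mul T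
        have h1 : Tendsto (fun n : ℕ => T / ((n : ℝ) + 1)) atTop (𝓝 0) := by
          simpa [div_eq_mul_inv] using h0
        simpa using tendsto_const_nhds.add h1
      exact tendsto_of_tendsto_of_tendsto_of_le_of_le tendsto_const_nhds hupper
        (fun n => (hb n).1) (fun n => (hb n).2)
    exact (ENNReal.continuous_ofReal.tendsto _).comp
      ((hX_rightCont ω q.2 q.1).tendsto.comp htend)
  -- integrability of the bound
  have hBm : AEMeasurable (fun ω => ENNReal.ofReal (Y ω) * 𝒩 ω Set.univ) P :=
    hY.aemeasurable.ennreal_ofReal.mul (h𝒩meas _ MeasurableSet.univ).aemeasurable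
  have hYint : ∫⁻ ω, ENNReal.ofReal (Y ω) ∂P < ⊤ := hY.lintegral_lt_top
  -- step B : the identity for h' n
  have stepB : ∀ n,
      (∫⁻ ω, ∫⁻ q, h' n ω q ∂𝒩 ω ∂P = ∫⁻ q, ∫⁻ ω, h' n ω q ∂P ∂μ) ∧
      AEMeasurable (fun ω => ∫⁻ q, h' n ω q ∂𝒩 ω) P ∧
      AEMeasurable (fun q => ∫⁻ ω, h' n ω q ∂P) μ := by
    intro n
    obtain ⟨hL, hLm⟩ := campbell_aux_left P 𝒩 (fun m => g n m) (h' n)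
      (fun ω => ENNReal.ofReal (Y ω))
      (fun m => (hFmeas n m).aemeasurable)
      (Eventually.of_forall fun ω m => (hgq n m ω).aemeasurable)
      (hgbound.mono fun ω hω m q => hω n m q)
      hBm hYN
      (Eventually.of_forall fun ω => (h𝒩S ω).mono fun q hq => hlim1 n ω q hq)
    obtain ⟨hR, hRm⟩ := campbell_aux_right P μ (fun m => g n m) (h' n)
      (fun ω => ENNReal.ofReal (Y ω))
      (fun m => (hGmeas n m).aemeasurable)
      (fun m q => (hgω n m q).aemeasurable)
      (hgbound.mono fun ω hω m q => hω n m q)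
      hYint
      (hμS.mono fun q hq => Eventually.of_forall fun ω => hlim1 n ω q hq)
    have heqm : (fun m => ∫⁻ ω, ∫⁻ q, g n m ω q ∂𝒩 ω ∂P)
        = fun m => ∫⁻ q, ∫⁻ ω, g n m ω q ∂P ∂μ := funext fun m => C3 n m
    exact ⟨tendsto_nhds_unique (heqm ▸ hL) hR, hLm, hRm⟩
  -- step C : pass to the limit in n
  obtain ⟨hL, -⟩ := campbell_aux_left P 𝒩 h' (fun ω q => ENNReal.ofReal (X ω q.1 q.2))
    (fun ω => ENNReal.ofReal (Y ω))
    (fun n => (stepB n).2.1)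
    (Eventually.of_forall fun ω n => (hhq n ω).aemeasurable)
    hhbound hBm hYN
    (Eventually.of_forall fun ω => (h𝒩S ω).mono fun q hq => hlim2 ω q hq)
  obtain ⟨hR, -⟩ := campbell_aux_right P μ h' (fun ω q => ENNReal.ofReal (X ω q.1 q.2))
    (fun ω => ENNReal.ofReal (Y ω))
    (fun n => (stepB n).2.2)
    (fun n q => (hhω n q).aemeasurable)
    hhbound hYint
    (hμS.mono fun q hq => Eventually.of_forall fun ω => hlim2 ω q hq)
  have heqn : (fun n => ∫⁻ ω, ∫⁻ q, h' n ω q ∂𝒩 ω ∂P)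
      = fun n => ∫⁻ q, ∫⁻ ω, h' n ω q ∂P ∂μ := funext fun n => (stepB n).1
  exact tendsto_nhds_unique (heqn ▸ hL) hR
end

section
/- Let μ and ν be finite measures on a Polish space 𝒳 with μ absolutely continuous with respect to ν, and let f be the Radon–Nikodym derivative dμ/dν. Then for any dissecting system {A_{n,j}, 1 ≤ j ≤ K_n}_{n≥0} of 𝒳, the sum over j of (μ(A_{n,j})/ν(A_{n,j})) 1_{s ∈ A_{n,j}} converges as n → ∞ to f(s), for μ-almost all s ∈ 𝒳. -/
open MeasureTheory Filter
open scoped ENNReal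

section Aux

variable {𝒳 : Type*} [m0 : MeasurableSpace 𝒳]

/-- Every set in the σ-algebra generated by a finite partition is a union of atoms. -/
lemma dissect_atoms (K : ℕ) (B : ℕ → Set 𝒳)
    (hpart : ∀ x : 𝒳, ∃! j, j < K ∧ x ∈ B j)
    {S : Set 𝒳}
    (hS : MeasurableSet[MeasurableSpace.generateFrom {s | ∃ j < K, s = B j}] S) :
    ∀ j < K, B j ⊆ S ∨ B j ∩ S = ∅ := by
  refine MeasurableSpace.generateFrom_induction
    (p := fun S _ => ∀ j < K, B j ⊆ S ∨ B j ∩ S = ∅) _ ?_ ?_ ?_ ?_ S hS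
  · rintro t ⟨j', hj', rfl⟩ _ j hj
    by_cases h : (B j ∩ B j').Nonempty
    · obtain ⟨x, hx1, hx2⟩ := h
      obtain ⟨i, _, huniq⟩ := hpart x
      have hjj' : j = j' := (huniq j ⟨hj, hx1⟩).trans (huniq j' ⟨hj', hx2⟩).symm
      exact Or.inl (hjj' ▸ Set.Subset.rfl)
    · exact Or.inr (Set.not_nonempty_iff_eq_empty.mp h)
  · intro j hj
    exact Or.inr (Set.inter_empty _)
  · intro t ht h j hj
    rcases h j hj with h1 | h1
    · exact Or.inr (by rw [← Set.diff_eq]; exact Set.diff_eq_empty.mpr h1)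
    · refine Or.inl fun x hx => ?_
      intro hxt
      exact Set.eq_empty_iff_forall_notMem.mp h1 x ⟨hx, hxt⟩
  · intro s hs h j hj
    by_cases hsub : ∃ i, (B j ∩ s i).Nonempty
    · obtain ⟨i, hi⟩ := hsub
      rcases h i j hj with h1 | h1
      · exact Or.inl (h1.trans (Set.subset_iUnion s i))
      · exact absurd h1 (Set.nonempty_iff_ne_empty.mp hi)
    · push_neg at hsub
      refine Or.inr (Set.eq_empty_iff_forall_notMem.mpr fun x hx => ?_)
      obtain ⟨hxB, hxU⟩ := hx
      obtain ⟨i, hxi⟩ := Set.mem_iUnion.mp hxU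
      have hmem : x ∈ B j ∩ s i := ⟨hxB, hxi⟩
      rw [hsub i] at hmem
      exact hmem

lemma dissect_disjoint (K : ℕ) (B : ℕ → Set 𝒳)
    (hpart : ∀ x : 𝒳, ∃! j, j < K ∧ x ∈ B j)
    {i j : ℕ} (hi : i < K) (hj : j < K) (hij : i ≠ j) : B i ∩ B j = ∅ := by
  by_contra h
  obtain ⟨x, hx1, hx2⟩ := Set.nonempty_iff_ne_empty.mpr h
  obtain ⟨l, _, huniq⟩ := hpart x
  exact hij ((huniq i ⟨hi, hx1⟩).trans (huniq j ⟨hj, hx2⟩).symm)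

/-- The conditional expectation with respect to the σ-algebra generated by a finite
measurable partition is the sum of average values over the atoms. -/
lemma condexp_dissect (ν : Measure 𝒳) [IsFiniteMeasure ν] (K : ℕ) (B : ℕ → Set 𝒳)
    (hmeas : ∀ j < K, MeasurableSet (B j))
    (hpart : ∀ x : 𝒳, ∃! j, j < K ∧ x ∈ B j)
    (g : 𝒳 → ℝ) (hg : Integrable g ν) :
    (fun s => ∑ j ∈ Finset.range K,
        (B j).indicator (fun _ => (∫ x in B j, g x ∂ν) / (ν (B j)).toReal) s)
      =ᵐ[ν] ν[g | MeasurableSpace.generateFrom {s | ∃ j < K, s = B j}] := by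
  set C : Set (Set 𝒳) := {s | ∃ j < K, s = B j} with hC_set
  have hm : MeasurableSpace.generateFrom C ≤ m0 := by
    refine MeasurableSpace.generateFrom_le ?_
    rintro t ⟨j, hj, rfl⟩
    exact hmeas j hj
  haveI : SigmaFinite (ν.trim hm) := inferInstance
  set c : ℕ → ℝ := fun j => (∫ x in B j, g x ∂ν) / (ν (B j)).toReal with hc_def
  have hint : ∀ j ∈ Finset.range K,
      Integrable ((B j).indicator (fun _ => c j)) ν := by
    intro j hj
    rw [integrable_indicator_iff (hmeas j (Finset.mem_range.mp hj))]
    exact integrableOn_const (measure_ne_top ν _)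
  have hhint : Integrable (fun s => ∑ j ∈ Finset.range K,
      (B j).indicator (fun _ => c j) s) ν := by
    exact integrable_finset_sum _ hint
  -- integral of the candidate over one atom
  have hatom : ∀ i < K, ∫ x in B i, (∑ j ∈ Finset.range K,
      (B j).indicator (fun _ => c j) x) ∂ν = ∫ x in B i, g x ∂ν := by
    intro i hi
    rw [integral_finset_sum _ (fun j hj => (hint j hj).integrableOn)]
    have : ∀ j ∈ Finset.range K,
        ∫ x in B i, (B j).indicator (fun _ => c j) x ∂ν
          = if j = i then (ν (B i)).toReal * c i else 0 := by
      intro j hj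
      rw [setIntegral_indicator (hmeas j (Finset.mem_range.mp hj))]
      by_cases hji : j = i
      · subst hji
        rw [Set.inter_self, setIntegral_const, if_pos rfl, smul_eq_mul, measureReal_def]
      · rw [if_neg hji, Set.inter_comm,
          dissect_disjoint K B hpart (Finset.mem_range.mp hj) hi hji]
        simp
    rw [Finset.sum_congr rfl this, Finset.sum_ite_eq' (Finset.range K) i
      (fun _ => (ν (B i)).toReal * c i), if_pos (Finset.mem_range.mpr hi)]
    by_cases hν : ν (B i) = 0
    · rw [hν]
      have : ν.restrict (B i) = 0 := Measure.restrict_eq_zero.mpr hν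
      simp [this]
    · have ht : (ν (B i)).toReal ≠ 0 :=
        ENNReal.toReal_ne_zero.mpr ⟨hν, measure_ne_top ν _⟩
      simp only [hc_def]
      rw [mul_comm, div_mul_cancel₀ _ ht]
  refine ae_eq_condExp_of_forall_setIntegral_eq hm hg
    (fun s _ _ => hhint.integrableOn) (fun S hS _ => ?_) ?_
  · -- set-integral equality
    have hScover : S = ⋃ j ∈ Finset.range K, (B j ∩ S) := by
      ext x
      constructor
      · intro hx
        obtain ⟨j, ⟨hj, hxj⟩, _⟩ := hpart x
        exact Set.mem_biUnion (Finset.mem_range.mpr hj) ⟨hxj, hx⟩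
      · intro hx
        obtain ⟨j, _, hxj⟩ := Set.mem_iUnion₂.mp hx
        exact Set.mem_of_mem_inter_right hxj
    have hSm0 : ∀ j ∈ Finset.range K, MeasurableSet (B j ∩ S) := fun j hj =>
      (hmeas j (Finset.mem_range.mp hj)).inter (hm S hS)
    have hdisj : Set.Pairwise (↑(Finset.range K)) (Function.onFun Disjoint fun j => B j ∩ S) := by
      intro i hi j hj hij
      simp only [Function.onFun, Set.disjoint_iff_inter_eq_empty]
      have := dissect_disjoint K B hpart (Finset.mem_range.mp hi)
        (Finset.mem_range.mp hj) hij
      rw [show B i ∩ S ∩ (B j ∩ S) = (B i ∩ B j) ∩ S by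
        ext x; simp [Set.mem_inter_iff]; tauto, this, Set.empty_inter]
    have key : ∀ f : 𝒳 → ℝ, Integrable f ν →
        ∫ x in S, f x ∂ν = ∑ j ∈ Finset.range K, ∫ x in B j ∩ S, f x ∂ν := by
      intro f hf
      conv_lhs => rw [hScover]
      exact integral_biUnion_finset _ hSm0 hdisj (fun j _ => hf.integrableOn)
    rw [key _ hhint, key _ hg]
    refine Finset.sum_congr rfl fun j hj => ?_
    rcases dissect_atoms K B hpart hS j (Finset.mem_range.mp hj) with h1 | h1
    · rw [Set.inter_eq_left.mpr h1]
      exact hatom j (Finset.mem_range.mp hj)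
    · rw [h1]; simp
  · -- measurability
    refine StronglyMeasurable.aestronglyMeasurable ?_
    refine Finset.stronglyMeasurable_fun_sum _ fun j hj => ?_
    exact (stronglyMeasurable_const (β := ℝ)).indicator
      (MeasurableSpace.measurableSet_generateFrom ⟨j, Finset.mem_range.mp hj, rfl⟩)

end Aux

/-- Kallenberg's differentiation theorem along a dissecting system: if `μ ≪ ν` are
finite measures on a Polish space and `{A n j : j < K n}` is a dissecting system
(nested finite measurable partitions whose maximal diameter tends to `0`), then
`∑_j (μ(A n j)/ν(A n j)) 1_{s ∈ A n j} → dμ/dν (s)` for `μ`-almost all `s`. -/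
theorem dissecting_system_rnDeriv
    {𝒳 : Type*} [MetricSpace 𝒳] [PolishSpace 𝒳] [MeasurableSpace 𝒳] [BorelSpace 𝒳]
    (μ ν : Measure 𝒳) [IsFiniteMeasure μ] [IsFiniteMeasure ν] (hac : μ ≪ ν)
    (K : ℕ → ℕ) (A : ℕ → ℕ → Set 𝒳)
    (hmeas : ∀ n j, j < K n → MeasurableSet (A n j))
    (hpart : ∀ n, ∀ x : 𝒳, ∃! j, j < K n ∧ x ∈ A n j)
    (hnested : ∀ n j, j < K (n + 1) → ∃ j', j' < K n ∧ A (n + 1) j ⊆ A n j')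
    (hdiam : Tendsto (fun n => ⨆ j ∈ Finset.range (K n), EMetric.diam (A n j))
      atTop (nhds 0)) :
    ∀ᵐ s ∂μ, Tendsto
      (fun n => ∑ j ∈ Finset.range (K n),
        (μ (A n j) / ν (A n j)) * (A n j).indicator (fun _ => (1 : ℝ≥0∞)) s)
      atTop (nhds (μ.rnDeriv ν s)) := by
  classical
  set 𝒢 : ℕ → MeasurableSpace 𝒳 :=
    fun n => MeasurableSpace.generateFrom {s | ∃ j < K n, s = A n j} with h𝒢_def
  have h𝒢le : ∀ n, 𝒢 n ≤ ‹MeasurableSpace 𝒳› := by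
    intro n
    refine MeasurableSpace.generateFrom_le ?_
    rintro t ⟨j, hj, rfl⟩
    exact hmeas n j hj
  have h𝒢mono : Monotone 𝒢 := by
    refine monotone_nat_of_le_succ fun n => ?_
    refine MeasurableSpace.generateFrom_le ?_
    rintro t ⟨j', hj', rfl⟩
    have heq : A n j' = ⋃ j ∈ (Finset.range (K (n + 1))).filter
        (fun j => A (n + 1) j ⊆ A n j'), A (n + 1) j := by
      ext x
      constructor
      · intro hx
        obtain ⟨j, ⟨hj, hxj⟩, _⟩ := hpart (n + 1) x
        obtain ⟨j'', hj'', hsub⟩ := hnested n j hj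
        have hj'j'' : j'' = j' := by
          obtain ⟨l, _, huniq⟩ := hpart n x
          exact (huniq j'' ⟨hj'', hsub hxj⟩).trans (huniq j' ⟨hj', hx⟩).symm
        subst hj'j''
        exact Set.mem_biUnion (Finset.mem_filter.mpr
          ⟨Finset.mem_range.mpr hj, hsub⟩) hxj
      · intro hx
        obtain ⟨j, hj, hxj⟩ := Set.mem_iUnion₂.mp hx
        exact (Finset.mem_filter.mp hj).2 hxj
    rw [heq]
    exact Finset.measurableSet_biUnion _ fun j hj =>
      MeasurableSpace.measurableSet_generateFrom
        ⟨j, Finset.mem_range.mp (Finset.mem_filter.mp hj).1, rfl⟩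
  set ℱ : Filtration ℕ ‹MeasurableSpace 𝒳› := ⟨𝒢, h𝒢mono, h𝒢le⟩ with hℱ_def
  have hsup : (⨆ n, 𝒢 n) = ‹MeasurableSpace 𝒳› := by
    refine le_antisymm (iSup_le h𝒢le) ?_
    rw [BorelSpace.measurable_eq (α := 𝒳)]
    refine MeasurableSpace.generateFrom_le fun U hU => ?_
    replace hU : IsOpen U := hU
    have hUeq : U = ⋃ n, ⋃ j ∈ Finset.range (K n), ⋃ (_ : A n j ⊆ U), A n j := by
      ext x
      constructor
      · intro hx
        obtain ⟨ε, hε, hball⟩ := Metric.isOpen_iff.mp hU x hx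
        have hev : ∀ᶠ n in atTop,
            (⨆ j ∈ Finset.range (K n), EMetric.diam (A n j)) < ENNReal.ofReal ε :=
          hdiam.eventually_lt_const (ENNReal.ofReal_pos.mpr hε)
        obtain ⟨n, hn⟩ := hev.exists
        obtain ⟨j, ⟨hj, hxj⟩, _⟩ := hpart n x
        refine Set.mem_iUnion.mpr ⟨n, Set.mem_iUnion₂.mpr ⟨j, Finset.mem_range.mpr hj,
          Set.mem_iUnion.mpr ⟨fun y hy => ?_, hxj⟩⟩⟩
        refine hball ?_
        have h1 : edist y x ≤ EMetric.diam (A n j) := EMetric.edist_le_diam_of_mem hy hxj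
        have h2 : EMetric.diam (A n j) ≤
            ⨆ j ∈ Finset.range (K n), EMetric.diam (A n j) :=
          le_iSup₂ (f := fun j _ => EMetric.diam (A n j)) j (Finset.mem_range.mpr hj)
        have : edist y x < ENNReal.ofReal ε := lt_of_le_of_lt (h1.trans h2) hn
        exact Metric.mem_ball.mpr (edist_lt_ofReal.mp this)
      · intro hx
        obtain ⟨n, hx⟩ := Set.mem_iUnion.mp hx
        obtain ⟨j, _, hx⟩ := Set.mem_iUnion₂.mp hx
        obtain ⟨hsub, hxj⟩ := Set.mem_iUnion.mp hx
        exact hsub hxj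
    rw [hUeq]
    refine MeasurableSet.iUnion fun n => ?_
    refine Finset.measurableSet_biUnion _ fun j hj => ?_
    refine MeasurableSet.iUnion fun hsub => ?_
    exact (le_iSup 𝒢 n) _ (MeasurableSpace.measurableSet_generateFrom
      ⟨j, Finset.mem_range.mp hj, rfl⟩)
  set g : 𝒳 → ℝ := fun x => (μ.rnDeriv ν x).toReal with hg_def
  have hgint : Integrable g ν := Measure.integrable_toReal_rnDeriv
  have hgsm : StronglyMeasurable[⨆ n, ℱ n] g := by
    have : (⨆ n, ℱ n) = ‹MeasurableSpace 𝒳› := hsup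
    rw [this]
    exact (Measure.measurable_rnDeriv μ ν).ennreal_toReal.stronglyMeasurable
  have hlevy := hgint.tendsto_ae_condExp hgsm
  have hcond : ∀ n, (fun s => ∑ j ∈ Finset.range (K n),
      (A n j).indicator (fun _ => (∫ x in A n j, g x ∂ν) / (ν (A n j)).toReal) s)
        =ᵐ[ν] ν[g | ℱ n] :=
    fun n => condexp_dissect ν (K n) (A n) (hmeas n) (hpart n) g hgint
  have hconds : ∀ᵐ s ∂ν, ∀ n, (∑ j ∈ Finset.range (K n),
      (A n j).indicator (fun _ => (∫ x in A n j, g x ∂ν) / (ν (A n j)).toReal) s)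
        = (ν[g | ℱ n]) s := ae_all_iff.mpr fun n => hcond n
  have hfin : ∀ᵐ s ∂ν, μ.rnDeriv ν s < ∞ := Measure.rnDeriv_lt_top μ ν
  have hmain : ∀ᵐ s ∂ν, Tendsto
      (fun n => ∑ j ∈ Finset.range (K n),
        (μ (A n j) / ν (A n j)) * (A n j).indicator (fun _ => (1 : ℝ≥0∞)) s)
      atTop (nhds (μ.rnDeriv ν s)) := by
    filter_upwards [hlevy, hconds, hfin] with s hs hcs hf
    have hreal : Tendsto (fun n => ∑ j ∈ Finset.range (K n),
        (A n j).indicator (fun _ => (∫ x in A n j, g x ∂ν) / (ν (A n j)).toReal) s)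
        atTop (nhds (g s)) := by
      simp only [hcs]; exact hs
    have hofReal : Tendsto (fun n => ENNReal.ofReal (∑ j ∈ Finset.range (K n),
        (A n j).indicator (fun _ => (∫ x in A n j, g x ∂ν) / (ν (A n j)).toReal) s))
        atTop (nhds (ENNReal.ofReal (g s))) :=
      (ENNReal.continuous_ofReal.tendsto _).comp hreal
    have hglim : ENNReal.ofReal (g s) = μ.rnDeriv ν s := by
      rw [hg_def]; exact ENNReal.ofReal_toReal hf.ne
    rw [hglim] at hofReal
    refine hofReal.congr fun n => ?_
    rw [ENNReal.ofReal_sum_of_nonneg]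
    · refine Finset.sum_congr rfl fun j hj => ?_
      rw [Measure.setIntegral_toReal_rnDeriv hac (A n j)]
      by_cases hxA : s ∈ A n j
      · rw [Set.indicator_of_mem hxA, Set.indicator_of_mem hxA, mul_one]
        by_cases hν : ν (A n j) = 0
        · have hμ : μ (A n j) = 0 := hac hν
          rw [hν, hμ]; simp
        · rw [ENNReal.ofReal_div_of_pos
            (ENNReal.toReal_pos hν (measure_ne_top ν _)),
            measureReal_def, ENNReal.ofReal_toReal (measure_ne_top μ _),
            ENNReal.ofReal_toReal (measure_ne_top ν _)]
      · rw [Set.indicator_of_notMem hxA, Set.indicator_of_notMem hxA, mul_zero,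
          ENNReal.ofReal_zero]
    · intro j hj
      refine Set.indicator_nonneg (fun _ _ => ?_) s
      positivity
  exact hac.ae_le hmain
end
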